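/- With k ∈ C^{n-1} extended n-periodically (k_0 = 0 and k_j = k_i when j ≡ i mod n, 0 ≤ i ≤ n−1), let d_k = ∂ − y^{-1}∑_{i=1}^{n-1} k_i e_i and θ = y∂. Then for every p ≥ 1: d_k^p y^p = ∏_{i=1}^{p}(θ + i − ∑_{j=0}^{n-1} k_{i+j} e_j) and y^p d_k^p = ∏_{i=0}^{p-1}(θ − i − ∑_{j=0}^{n-1} k_{j−i} e_j), as elements of Q = C[∂, y^{±1}]*Γ. -/

import Mathlib

open Finset

/-- ω = e^{2πi/n}, a primitive n-th root of unity. -/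
noncomputable def omegaRoot (n : ℕ) : ℂ := Complex.exp (2 * Real.pi * Complex.I / n)

lemma prodA {Q : Type*} [Ring Q] (dk y : Q) (A : ℕ → Q)
    (h1 : dk * y = A 1)
    (hshift : ∀ t, A t * y = y * A (t+1)) :
    ∀ p : ℕ, dk ^ p * y ^ p = ((List.range p).map (fun i => A (i+1))).prod := by
  have hsh : ∀ t q, A t * y ^ q = y ^ q * A (t + q) := by
    intro t q
    induction q generalizing t with
    | zero => simp
    | succ q ihq =>
      rw [pow_succ', ← mul_assoc, hshift, mul_assoc, ihq, ← mul_assoc, ← pow_succ']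
      ring_nf
  intro p
  induction p with
  | zero => simp
  | succ p ih =>
    rw [pow_succ, pow_succ', mul_assoc, ← mul_assoc dk, h1, ← mul_assoc, mul_assoc _ (A 1),
      hsh, ← mul_assoc, ih, List.range_succ, List.map_append, List.prod_append]
    simp [add_comm]

lemma prodB {Q : Type*} [Ring Q] (dk y : Q) (B : ℕ → Q)
    (h0 : y * dk = B 0)
    (hshift : ∀ t, y * B t = B (t+1) * y)
    (hcomm : ∀ i j, Commute (B i) (B j)) :
    ∀ p : ℕ, y ^ p * dk ^ p = ((List.range p).map B).prod := by
  have hsh : ∀ t q, y ^ q * B t = B (t + q) * y ^ q := by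
    intro t q
    induction q generalizing t with
    | zero => simp
    | succ q ihq =>
      rw [pow_succ, mul_assoc, hshift, ← mul_assoc, ihq, mul_assoc, ← pow_succ]
      ring_nf
  intro p
  induction p with
  | zero => simp
  | succ p ih =>
    have : y ^ (p+1) * dk ^ (p+1) = B p * (y ^ p * dk ^ p) := by
      rw [pow_succ, pow_succ', mul_assoc, ← mul_assoc y, h0, ← mul_assoc, mul_assoc _ (B 0),
        ← mul_assoc (y^p), hsh]
      simp [mul_assoc]
    rw [this, ih, List.range_succ, List.map_append, List.prod_append]
    have hc : Commute (B p) ((List.range p).map B).prod := by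
      apply Commute.list_prod_right
      intro x hx
      simp only [List.mem_map] at hx
      obtain ⟨i, _, rfl⟩ := hx
      exact hcomm p i
    rw [hc.eq]
    simp


/-- In `Q = ℂ[∂, y^{±1}] * Γ` (Γ cyclic of order n, `yγ = ωγy`, `γ∂ = ω∂γ`),
with `k ∈ ℂ^{n-1}` extended `n`-periodically (`k 0 = 0`),
`d_k = ∂ − y^{-1} ∑_{i=1}^{n-1} k_i e_i` and `θ = y∂`, one has for all `p ≥ 1`:
`d_k^p y^p = ∏_{i=1}^{p} (θ + i − ∑_{j=0}^{n-1} k_{i+j} e_j)` and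
`y^p d_k^p = ∏_{i=0}^{p-1} (θ − i − ∑_{j=0}^{n-1} k_{j−i} e_j)`
(the factors pairwise commute; the product is taken in the listed order). -/
theorem statement1 {Q : Type*} [Ring Q] [Algebra ℂ Q] (n : ℕ) (hn : 0 < n)
    (y yinv d γ : Q)
    (hy : y * yinv = 1) (hy' : yinv * y = 1)
    (hWeyl : d * y - y * d = 1)
    (hγ : γ ^ n = 1)
    (hyγ : y * γ = omegaRoot n • (γ * y))
    (hγd : γ * d = omegaRoot n • (d * γ))
    (e : ℕ → Q)
    (he : ∀ i, e i = (n : ℂ)⁻¹ • ∑ j ∈ range n, ((omegaRoot n) ^ i • γ) ^ j)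
    (k : ℤ → ℂ) (hk0 : k 0 = 0) (hkper : ∀ j : ℤ, k (j + n) = k j)
    (dk θ : Q)
    (hdk : dk = d - yinv * ∑ i ∈ Icc 1 (n - 1), k i • e i)
    (hθ : θ = y * d) :
    ∀ p : ℕ, 1 ≤ p →
      (dk ^ p * y ^ p =
        ((List.range p).map (fun (i : ℕ) =>
          θ + (((i : ℂ) + 1) • (1 : Q)) -
            ∑ j ∈ range n, k ((i : ℤ) + 1 + (j : ℤ)) • e j)).prod)
      ∧ (y ^ p * dk ^ p =
        ((List.range p).map (fun (i : ℕ) =>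
          θ - ((i : ℂ) • (1 : Q)) -
            ∑ j ∈ range n, k ((j : ℤ) - (i : ℤ)) • e j)).prod) := by
  obtain ⟨m, rfl⟩ : ∃ m, n = m + 1 := ⟨n - 1, (Nat.succ_pred_eq_of_pos hn).symm⟩
  simp only [Nat.add_sub_cancel] at hdk
  have hω0 : omegaRoot (m+1) ≠ 0 := Complex.exp_ne_zero _
  have hωn : omegaRoot (m+1) ^ (m+1) = 1 := by
    have hne : ((m+1:ℕ):ℂ) ≠ 0 := Nat.cast_ne_zero.mpr (Nat.succ_ne_zero m)
    have h2 : ((m+1:ℕ):ℂ) * (2 * (Real.pi:ℂ) * Complex.I / ((m+1:ℕ):ℂ))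
        = 2 * (Real.pi:ℂ) * Complex.I := by rw [mul_comm, div_mul_cancel₀ _ hne]
    rw [omegaRoot, ← Complex.exp_nat_mul, h2, Complex.exp_two_pi_mul_I]
  have hyγm : ∀ j : ℕ, y * γ ^ j = omegaRoot (m+1) ^ j • (γ ^ j * y) := by
    intro j
    induction j with
    | zero => simp
    | succ j ih =>
      rw [pow_succ, ← mul_assoc, ih, smul_mul_assoc, mul_assoc, hyγ, mul_smul_comm,
        smul_smul]
      rw [pow_succ, mul_assoc]
  have hγdm : ∀ j : ℕ, γ ^ j * d = omegaRoot (m+1) ^ j • (d * γ ^ j) := by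
    intro j
    induction j with
    | zero => simp
    | succ j ih =>
      rw [pow_succ, mul_assoc, hγd, mul_smul_comm, ← mul_assoc, ih, smul_mul_assoc,
        smul_smul, mul_assoc, ← pow_succ, ← pow_succ']
  have hye : ∀ i, y * e i = e (i+1) * y := by
    intro i
    rw [he i, he (i+1), mul_smul_comm, smul_mul_assoc]
    congr 1
    rw [Finset.mul_sum, Finset.sum_mul]
    refine Finset.sum_congr rfl fun j _ => ?_
    rw [smul_pow, smul_pow, mul_smul_comm, smul_mul_assoc, hyγm, smul_smul]
    congr 1
    rw [← pow_mul, ← pow_mul, ← pow_add]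
    congr 1
    ring
  have heper : ∀ i, e (i + (m+1)) = e i := by
    intro i
    rw [he, he]
    have h : omegaRoot (m+1) ^ (i + (m+1)) = omegaRoot (m+1) ^ i := by
      rw [pow_add, hωn, mul_one]
    rw [h]
  have he0 : e (m+1) = e 0 := by simpa using heper 0
  have hθγ : ∀ j : ℕ, θ * γ ^ j = γ ^ j * θ := by
    intro j
    have h1 : omegaRoot (m+1) ^ j • (θ * γ ^ j) = omegaRoot (m+1) ^ j • (γ ^ j * θ) := by
      rw [hθ]
      calc omegaRoot (m+1) ^ j • (y * d * γ ^ j)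
          = y * (omegaRoot (m+1) ^ j • (d * γ ^ j)) := by rw [mul_smul_comm, mul_assoc]
        _ = y * (γ ^ j * d) := by rw [← hγdm]
        _ = (y * γ ^ j) * d := by rw [mul_assoc]
        _ = (omegaRoot (m+1) ^ j • (γ ^ j * y)) * d := by rw [hyγm]
        _ = omegaRoot (m+1) ^ j • (γ ^ j * (y * d)) := by rw [smul_mul_assoc, mul_assoc]
    have h2 := congrArg (fun x => (omegaRoot (m+1) ^ j)⁻¹ • x) h1
    simpa [smul_smul, inv_mul_cancel₀ (pow_ne_zero j hω0)] using h2
  have hco : ∀ i j, Commute (e i) (e j) := by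
    intro i j
    rw [he i, he j]
    refine Commute.smul_left (Commute.smul_right ?_ _) _
    refine Commute.sum_left _ _ _ fun a _ => Commute.sum_right _ _ _ fun b _ => ?_
    simp only [smul_pow]
    exact Commute.smul_left (Commute.smul_right ((Commute.refl γ).pow_pow a b) _) _
  have hθe : ∀ i, Commute θ (e i) := by
    intro i
    rw [he]
    refine Commute.smul_right ?_ _
    refine Commute.sum_right _ _ _ fun a _ => ?_
    simp only [smul_pow]
    exact Commute.smul_right (hθγ a) _
  have hKy : ∀ i : ℤ, (∑ j ∈ range (m+1), k (i + ↑j) • e j) * y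
      = y * ∑ j ∈ range (m+1), k (i + 1 + ↑j) • e j := by
    intro i
    rw [Finset.sum_mul, Finset.mul_sum]
    rw [Finset.sum_range_succ' (fun j => k (i + ↑j) • e j * y) m]
    rw [Finset.sum_range_succ (fun j => y * (k (i + 1 + ↑j) • e j)) m]
    congr 1
    · refine Finset.sum_congr rfl fun j _ => ?_
      rw [mul_smul_comm, hye j, smul_mul_assoc]
      congr 1
      congr 1
      push_cast; ring
    · rw [mul_smul_comm, hye m, he0, smul_mul_assoc]
      congr 1
      have h0 : i + ((0:ℕ):ℤ) = i := by simp
      rw [h0, show i + 1 + ((m:ℕ):ℤ) = i + ((m+1:ℕ):ℤ) by push_cast; ring, hkper]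
  have hLy : ∀ i : ℤ, y * (∑ j ∈ range (m+1), k (↑j - i) • e j)
      = (∑ j ∈ range (m+1), k (↑j - (i+1)) • e j) * y := by
    intro i
    rw [Finset.mul_sum, Finset.sum_mul]
    rw [Finset.sum_range_succ (fun j => y * (k (↑j - i) • e j)) m]
    rw [Finset.sum_range_succ' (fun j => k (↑j - (i+1)) • e j * y) m]
    congr 1
    · refine Finset.sum_congr rfl fun j _ => ?_
      rw [mul_smul_comm, hye j, smul_mul_assoc]
      congr 1
      congr 1
      push_cast; ring
    · rw [mul_smul_comm, hye m, he0, smul_mul_assoc]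
      congr 1
      rw [show ((m:ℕ):ℤ) - i = (((0:ℕ):ℤ) - (i+1)) + ((m+1:ℕ):ℤ) by push_cast; ring, hkper]
  have hdy : d * y = 1 + y * d := sub_eq_iff_eq_add.mp hWeyl
  have hθy : θ * y = y * θ + y := by
    rw [hθ, mul_assoc, hdy, mul_add, mul_one]
    exact add_comm _ _
  have hS : (∑ i ∈ Icc 1 m, k ↑i • e i) = ∑ j ∈ range (m+1), k ↑j • e j := by
    rw [Finset.sum_range_succ' (fun j => k ↑j • e j) m]
    rw [Nat.cast_zero, hk0, zero_smul, add_zero]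
    rw [← Finset.Ico_add_one_right_eq_Icc, Finset.sum_Ico_eq_sum_range]
    exact Finset.sum_congr (by simp) fun j _ => by rw [Nat.add_comm 1 j]
  have hA1 : dk * y = θ + (((1:ℕ)):ℂ) • (1:Q)
      - ∑ j ∈ range (m+1), k ((((1:ℕ)):ℤ) + ↑j) • e j := by
    have hS0 : (∑ i ∈ Icc 1 m, k ↑i • e i) = ∑ j ∈ range (m+1), k ((0:ℤ) + ↑j) • e j := by
      rw [hS]; exact Finset.sum_congr rfl fun j _ => by rw [zero_add]
    rw [hdk, sub_mul, hdy, mul_assoc, hS0, hKy 0, ← mul_assoc yinv, hy', one_mul, ← hθ]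
    have hc : (∑ j ∈ range (m+1), k ((0:ℤ)+1+↑j) • e j)
        = ∑ j ∈ range (m+1), k ((((1:ℕ)):ℤ) + ↑j) • e j :=
      Finset.sum_congr rfl fun j _ => by norm_num
    rw [hc]
    simp only [Nat.cast_one, one_smul]
    abel
  have hshiftA : ∀ t : ℕ,
      (θ + ((t:ℕ):ℂ) • (1:Q) - ∑ j ∈ range (m+1), k (((t:ℕ):ℤ) + ↑j) • e j) * y
      = y * (θ + (((t+1:ℕ)):ℂ) • (1:Q)
        - ∑ j ∈ range (m+1), k ((((t+1:ℕ)):ℤ) + ↑j) • e j) := by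
    intro t
    have hc : (∑ j ∈ range (m+1), k (((t:ℕ):ℤ) + 1 + ↑j) • e j)
        = ∑ j ∈ range (m+1), k ((((t+1:ℕ)):ℤ) + ↑j) • e j :=
      Finset.sum_congr rfl fun j _ => by push_cast; ring_nf
    rw [sub_mul, add_mul, hθy, smul_mul_assoc, one_mul, hKy (t:ℤ), hc]
    rw [mul_sub, mul_add, mul_smul_comm, mul_one]
    have hts : (((t+1:ℕ)):ℂ) • y = ((t:ℕ):ℂ) • y + y := by
      push_cast
      rw [add_smul, one_smul]
    rw [hts]
    abel
  have hB0 : y * dk = θ - ((0:ℕ):ℂ) • (1:Q)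
      - ∑ j ∈ range (m+1), k (↑j - ((0:ℕ):ℤ)) • e j := by
    have hc : (∑ j ∈ range (m+1), k (↑j - ((0:ℕ):ℤ)) • e j) = ∑ i ∈ Icc 1 m, k ↑i • e i := by
      rw [hS]; exact Finset.sum_congr rfl fun j _ => by norm_num
    rw [hdk, mul_sub, ← hθ, ← mul_assoc, hy, one_mul, hc]
    simp
  have hshiftB : ∀ t : ℕ,
      y * (θ - ((t:ℕ):ℂ) • (1:Q) - ∑ j ∈ range (m+1), k (↑j - ((t:ℕ):ℤ)) • e j)
      = (θ - (((t+1:ℕ)):ℂ) • (1:Q)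
        - ∑ j ∈ range (m+1), k (↑j - (((t+1:ℕ)):ℤ)) • e j) * y := by
    intro t
    have hc : (∑ j ∈ range (m+1), k (↑j - ((t:ℤ) + 1)) • e j)
        = ∑ j ∈ range (m+1), k (↑j - (((t+1:ℕ)):ℤ)) • e j :=
      Finset.sum_congr rfl fun j _ => by push_cast; ring_nf
    rw [mul_sub, mul_sub, hLy (t:ℤ), hc, mul_smul_comm, mul_one]
    rw [sub_mul, sub_mul, hθy, smul_mul_assoc, one_mul]
    have hts : (((t+1:ℕ)):ℂ) • y = ((t:ℕ):ℂ) • y + y := by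
      push_cast
      rw [add_smul, one_smul]
    rw [hts]
    abel
  have hcommB : ∀ i j : ℕ,
      Commute (θ - (i:ℂ) • (1:Q) - ∑ jj ∈ range (m+1), k (↑jj - (i:ℤ)) • e jj)
              (θ - (j:ℂ) • (1:Q) - ∑ jj ∈ range (m+1), k (↑jj - (j:ℤ)) • e jj) := by
    intro i j
    have hL : ∀ (a b : ℤ), Commute (∑ jj ∈ range (m+1), k (↑jj - a) • e jj)
        (∑ jj ∈ range (m+1), k (↑jj - b) • e jj) :=
      fun a b => Commute.sum_left _ _ _ fun x _ => Commute.sum_right _ _ _ fun z _ =>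
        Commute.smul_left (Commute.smul_right (hco x z) _) _
    have hθL : ∀ (a : ℤ), Commute θ (∑ jj ∈ range (m+1), k (↑jj - a) • e jj) :=
      fun a => Commute.sum_right _ _ _ fun x _ => Commute.smul_right (hθe x) _
    have hone : ∀ (c : ℂ) (x : Q), Commute (c • (1:Q)) x :=
      fun c x => Commute.smul_left (Commute.one_left x) c
    have cθ : Commute θ (θ - (j:ℂ) • (1:Q) - ∑ jj ∈ range (m+1), k (↑jj - (j:ℤ)) • e jj) :=
      ((Commute.refl θ).sub_right (hone _ _).symm).sub_right (hθL _)
    have ca1 : Commute ((i:ℂ) • (1:Q))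
        (θ - (j:ℂ) • (1:Q) - ∑ jj ∈ range (m+1), k (↑jj - (j:ℤ)) • e jj) := hone _ _
    have cLa : Commute (∑ jj ∈ range (m+1), k (↑jj - (i:ℤ)) • e jj)
        (θ - (j:ℂ) • (1:Q) - ∑ jj ∈ range (m+1), k (↑jj - (j:ℤ)) • e jj) :=
      (((hθL _).symm.sub_right (hone _ _).symm).sub_right (hL _ _))
    exact (cθ.sub_left ca1).sub_left cLa
  intro p _hp
  constructor
  · have hmain := prodA dk y
      (fun t : ℕ => θ + ((t:ℕ):ℂ) • (1:Q) - ∑ j ∈ range (m+1), k (((t:ℕ):ℤ) + ↑j) • e j)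
      hA1 hshiftA p
    rw [hmain]
    refine congrArg List.prod (List.map_congr_left fun i _ => ?_)
    show θ + (((i+1:ℕ)):ℂ) • (1:Q) - ∑ j ∈ range (m+1), k ((((i+1:ℕ)):ℤ) + ↑j) • e j
      = θ + (((i : ℂ) + 1) • (1 : Q)) - ∑ j ∈ range (m+1), k ((i : ℤ) + 1 + (j : ℤ)) • e j
    have h1 : ((((i+1:ℕ)):ℂ)) = (i:ℂ) + 1 := by push_cast; ring
    have h2 : (∑ j ∈ range (m+1), k ((((i+1:ℕ)):ℤ) + ↑j) • e j)
        = ∑ j ∈ range (m+1), k ((i:ℤ) + 1 + ↑j) • e j :=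
      Finset.sum_congr rfl fun j _ => by push_cast; ring_nf
    rw [h1, h2]
  · exact prodB dk y
      (fun i : ℕ => θ - ((i:ℕ):ℂ) • (1:Q) - ∑ j ∈ range (m+1), k (↑j - ((i:ℕ):ℤ)) • e j)
      hB0 hshiftB hcommB p
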